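/- Let Y be a real Banach space which is sequentially almost square, i.e., there exists a sequence (y_n) in the unit sphere of Y such that ‖y + y_n‖ → 1 as n → ∞ for every y in the unit sphere of Y. Then the dual space Y* has an L-orthogonal sequence. -/

import Mathlib

open Filter NormedSpace

-- choose an almost-norming unit vector
lemma aux_unit {Y : Type} [NormedAddCommGroup Y] [NormedSpace ℝ Y]
    (y0 : Y) (hy0 : ‖y0‖ = 1) (φ : StrongDual ℝ Y) {ε : ℝ} (hε : 0 < ε) :
    ∃ z : Y, ‖z‖ = 1 ∧ ‖φ‖ - ε < φ z := by
  by_cases h : ‖φ‖ - ε < 0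
  · rcases le_or_gt 0 (φ y0) with h0 | h0
    · exact ⟨y0, hy0, lt_of_lt_of_le h h0⟩
    · exact ⟨-y0, by simp [hy0], by simpa using lt_of_lt_of_le h (by linarith [map_neg φ y0])⟩
  · push_neg at h
    have hlt : ‖φ‖ - ε < ‖φ‖ := by linarith
    obtain ⟨x, hx1, hx2⟩ := φ.exists_lt_apply_of_lt_opNorm hlt
    have hx2' : ‖φ‖ - ε < |φ x| := by simpa [Real.norm_eq_abs] using hx2
    have hxne : φ x ≠ 0 := by
      intro h0; rw [h0] at hx2'; simp at hx2'; linarith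
    have hxnorm : 0 < ‖x‖ := by
      rcases eq_or_ne x 0 with rfl | hne
      · simp at hxne
      · exact norm_pos_iff.mpr hne
    rcases lt_or_gt_of_ne hxne with hneg | hpos
    · refine ⟨-(‖x‖⁻¹ • x), by rw [norm_neg, norm_smul, norm_inv, norm_norm, inv_mul_cancel₀ hxnorm.ne'], ?_⟩
      have : φ (-(‖x‖⁻¹ • x)) = ‖x‖⁻¹ * (-(φ x)) := by simp only [map_neg, map_smul, smul_eq_mul]; ring
      rw [this]
      have habs : |φ x| = -(φ x) := abs_of_neg hneg
      have h1 : -(φ x) ≤ ‖x‖⁻¹ * (-(φ x)) := by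
        have : (1:ℝ) ≤ ‖x‖⁻¹ := by
          rw [le_inv_comm₀ one_pos hxnorm]; simpa using hx1.le
        nlinarith [neg_pos.mpr hneg]
      linarith [hx2'.trans_le (habs.le.trans h1)]
    · refine ⟨‖x‖⁻¹ • x, by rw [norm_smul, norm_inv, norm_norm, inv_mul_cancel₀ hxnorm.ne'], ?_⟩
      have : φ (‖x‖⁻¹ • x) = ‖x‖⁻¹ * φ x := by simp [map_smul]
      rw [this]
      have habs : |φ x| = φ x := abs_of_pos hpos
      have h1 : φ x ≤ ‖x‖⁻¹ * φ x := by
        have : (1:ℝ) ≤ ‖x‖⁻¹ := by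
          rw [le_inv_comm₀ one_pos hxnorm]; simpa using hx1.le
        nlinarith
      linarith [hx2'.trans_le (habs.le.trans h1)]

-- half of weak nullity
lemma aux_half {Y : Type} [NormedAddCommGroup Y] [NormedSpace ℝ Y]
    (y : ℕ → Y) (hy : ∀ n, ‖y n‖ = 1)
    (hsq : ∀ z : Y, ‖z‖ = 1 → Tendsto (fun n => ‖z + y n‖) atTop (nhds 1))
    (φ : StrongDual ℝ Y) {ε : ℝ} (hε : 0 < ε) :
    ∀ᶠ n in atTop, φ (y n) < ε := by
  obtain ⟨z, hz, hφz⟩ := aux_unit (y 0) (hy 0) φ (half_pos hε)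
  have hδ : 0 < ε / (2 * (‖φ‖ + 1)) := by positivity
  have hev : ∀ᶠ n in atTop, ‖z + y n‖ < 1 + ε / (2 * (‖φ‖ + 1)) :=
    (hsq z hz).eventually (eventually_lt_nhds (by linarith))
  filter_upwards [hev] with n hn
  have h1 : φ (y n) = φ (z + y n) - φ z := by rw [map_add]; ring
  have h2 : φ (z + y n) ≤ ‖φ‖ * ‖z + y n‖ :=
    (le_abs_self _).trans (by simpa [Real.norm_eq_abs] using φ.le_opNorm (z + y n))
  have hφ0 : 0 ≤ ‖φ‖ := norm_nonneg _
  have h3 : ‖φ‖ * ‖z + y n‖ ≤ ‖φ‖ * (1 + ε / (2 * (‖φ‖ + 1))) :=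
    mul_le_mul_of_nonneg_left hn.le hφ0
  have h4 : ‖φ‖ * (ε / (2 * (‖φ‖ + 1))) ≤ ε / 2 := by
    rw [← mul_div_assoc, div_le_div_iff₀ (by positivity) two_pos]
    nlinarith
  nlinarith [h1, h2, h3, h4, hφz]

-- weak nullity of y
lemma aux_wk {Y : Type} [NormedAddCommGroup Y] [NormedSpace ℝ Y]
    (y : ℕ → Y) (hy : ∀ n, ‖y n‖ = 1)
    (hsq : ∀ z : Y, ‖z‖ = 1 → Tendsto (fun n => ‖z + y n‖) atTop (nhds 1))
    (φ : StrongDual ℝ Y) : Tendsto (fun n => φ (y n)) atTop (nhds 0) := by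
  rw [NormedAddCommGroup.tendsto_nhds_zero]
  intro ε hε
  filter_upwards [aux_half y hy hsq φ hε, aux_half y hy hsq (-φ) hε] with n h1 h2
  rw [Real.norm_eq_abs, abs_lt]
  constructor
  · have : (-φ) (y n) = -(φ (y n)) := rfl
    linarith [this ▸ h2]
  · exact h1

theorem stmt2 (Y : Type) [NormedAddCommGroup Y] [NormedSpace ℝ Y] [CompleteSpace Y]
    (y : ℕ → Y) (hy : ∀ n, ‖y n‖ = 1)
    (hsq : ∀ z : Y, ‖z‖ = 1 →
      Filter.Tendsto (fun n => ‖z + y n‖) Filter.atTop (nhds 1)) :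
    ∃ g : ℕ → StrongDual ℝ Y, (∀ n, ‖g n‖ ≤ 1) ∧
      ∀ φ : StrongDual ℝ Y,
        Filter.Tendsto (fun n => ‖φ + g n‖) Filter.atTop (nhds (1 + ‖φ‖)) := by
  have hne : ∀ n, y n ≠ 0 := by
    intro n h; have := hy n; rw [h] at this; simp at this
  choose g hg1 hg2 using fun n => exists_dual_vector ℝ (y n) (norm_ne_zero_iff.mpr (hne n))
  have hg2' : ∀ n, g n (y n) = 1 := by
    intro n; have := hg2 n; rw [hy n] at this; simpa using this
  -- g is weak* null
  have hgz : ∀ z : Y, Tendsto (fun n => g n z) atTop (nhds 0) := by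
    have hunit : ∀ z : Y, ‖z‖ = 1 → Tendsto (fun n => g n z) atTop (nhds 0) := by
      intro z hz
      have hlow : ∀ n, 1 - ‖-z + y n‖ ≤ g n z := by
        intro n
        have h1 : g n (y n - z) ≤ ‖y n - z‖ := by
          have h0 := (g n).le_opNorm (y n - z)
          rw [hg1 n, one_mul] at h0
          exact (le_abs_self _).trans (by simpa [Real.norm_eq_abs] using h0)
        have h2 : g n (y n - z) = 1 - g n z := by rw [map_sub, hg2' n]
        have h3 : ‖y n - z‖ = ‖-z + y n‖ := by rw [sub_eq_neg_add]
        linarith [h3 ▸ h1, h2 ▸ h1]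
      have hup : ∀ n, g n z ≤ ‖z + y n‖ - 1 := by
        intro n
        have h1 : g n (z + y n) ≤ ‖z + y n‖ := by
          have h0 := (g n).le_opNorm (z + y n)
          rw [hg1 n, one_mul] at h0
          exact (le_abs_self _).trans (by simpa [Real.norm_eq_abs] using h0)
        have h2 : g n (z + y n) = g n z + 1 := by rw [map_add, hg2' n]
        linarith
      have hl : Tendsto (fun n => 1 - ‖-z + y n‖) atTop (nhds 0) := by
        have := (hsq (-z) (by simp [hz])).const_sub 1
        simpa using this
      have hu : Tendsto (fun n => ‖z + y n‖ - 1) atTop (nhds 0) := by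
        have := (hsq z hz).sub_const 1
        simpa using this
      exact tendsto_of_tendsto_of_tendsto_of_le_of_le hl hu hlow hup
    intro z
    rcases eq_or_ne z 0 with rfl | hz0
    · simp only [map_zero]; exact tendsto_const_nhds
    · have hzn : 0 < ‖z‖ := norm_pos_iff.mpr hz0
      have h := (hunit (‖z‖⁻¹ • z) (by rw [norm_smul, norm_inv, norm_norm, inv_mul_cancel₀ hzn.ne'])).const_mul ‖z‖
      simp only [map_smul, smul_eq_mul] at h
      have heq : (fun n => ‖z‖ * (‖z‖⁻¹ * g n z)) = fun n => g n z := by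
        funext n; field_simp
      rw [heq] at h
      simpa using h
  refine ⟨g, fun n => (hg1 n).le, fun φ => ?_⟩
  rw [Metric.tendsto_nhds]
  intro ε hε
  obtain ⟨z, hz, hφz⟩ := aux_unit (y 0) (hy 0) φ hε
  set L : ℕ → ℝ := fun n => (φ z + φ (y n) + g n z + 1) / ‖z + y n‖ with hLdef
  have hLt : Tendsto L atTop (nhds (φ z + 1)) := by
    have hnum : Tendsto (fun n => φ z + φ (y n) + g n z + 1) atTop (nhds (φ z + 1)) := by
      have := ((tendsto_const_nhds (x := φ z)).add (aux_wk y hy hsq φ)).add (hgz z)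
      have := this.add (tendsto_const_nhds (x := (1:ℝ)))
      simpa using this
    have := hnum.div (hsq z hz) one_ne_zero
    rw [div_one] at this
    exact this
  have h1 : ∀ᶠ n in atTop, (1:ℝ)/2 < ‖z + y n‖ :=
    (hsq z hz).eventually (eventually_gt_nhds (by norm_num))
  have h2 : ∀ᶠ n in atTop, 1 + ‖φ‖ - ε < L n :=
    hLt.eventually (eventually_gt_nhds (by linarith))
  filter_upwards [h1, h2] with n hn1 hn2
  have hupper : ‖φ + g n‖ ≤ 1 + ‖φ‖ := by
    calc ‖φ + g n‖ ≤ ‖φ‖ + ‖g n‖ := norm_add_le _ _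
    _ ≤ 1 + ‖φ‖ := by linarith [(hg1 n).le]
  have hlower : L n ≤ ‖φ + g n‖ := by
    rw [hLdef]
    rw [div_le_iff₀ (by linarith)]
    have heval : φ z + φ (y n) + g n z + 1 = (φ + g n) (z + y n) := by
      simp [map_add, hg2' n]; ring
    rw [heval]
    exact (le_abs_self _).trans (by simpa [Real.norm_eq_abs] using (φ + g n).le_opNorm (z + y n))
  rw [Real.dist_eq, abs_lt]
  constructor <;> linarith
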